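/- Dominant-response condition for volume targeting: fix T with 0 < T ≤ min (θ̲₁ · T_max) (θ̲₂ · T_max) and a type θ₁ ∈ [θ̲₁, θ̄₁]. If σ₁(θ₁) ≤ m_A(σ₂(θ₂)) for every θ₂ ∈ [θ̲₂, θ̄₂], then for every θ₂ ∈ [θ̲₂, θ̄₂], σ₁(θ₁) maximizes x ↦ π_mm(x, σ₂(θ₂); θ₁, θ₂) over [0, σ₂(θ₂)]. Symmetrically, for a type θ₂ ∈ [θ̲₂, θ̄₂], if σ₂(θ₂) ≥ s_A(σ₁(θ₁)) for every θ₁ ∈ [θ̲₁, θ̄₁], then for every θ₁ ∈ [θ̲₁, θ̄₁], σ₂(θ₂) maximizes y ↦ π_rm(σ₁(θ₁), y; θ₁, θ₂) over [σ₁(θ₁), r_b]. -/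
import Mathlib


open Set

/-- Type-dependent interdealer trade quantity. -/
noncomputable def interQt (D S : ℝ → ℝ) (θ1 θ2 x y : ℝ) : ℝ :=
  min (θ1 * D x) (θ2 * S y)

/-- Type-dependent payoff of `BD_mm`. -/
noncomputable def piMMt (D S : ℝ → ℝ) (θ1 θ2 x y : ℝ) : ℝ :=
  (1 / 2) * max (y - x) 0 * interQt D S θ1 θ2 x y -
    max (θ1 * D x - interQt D S θ1 θ2 x y) 0 * x

/-- Type-dependent payoff of `BD_rm`. -/
noncomputable def piRMt (D S : ℝ → ℝ) (θ1 θ2 x y : ℝ) : ℝ :=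
  (1 / 2) * max (y - x) 0 * interQt D S θ1 θ2 x y -
    max (θ2 * S y - interQt D S θ1 θ2 x y) 0 * y



/-- Concavity of `r ↦ (y - r) * f r` for increasing strictly concave `f`. -/
lemma concave_mul_left_aux (f : ℝ → ℝ) (U : Set ℝ) (hUo : IsOpen U)
    (rb : ℝ) (hU : Icc (0:ℝ) rb ⊆ U) (hf2 : ContDiffOn ℝ 2 f U)
    (hfc : ContinuousOn f (Icc 0 rb))
    (hf' : ∀ x ∈ Icc (0:ℝ) rb, 0 < deriv f x)
    (hf'' : ∀ x ∈ Icc (0:ℝ) rb, deriv (deriv f) x < 0)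
    (y : ℝ) (hy0 : 0 < y) (hyb : y ≤ rb) :
    ConcaveOn ℝ (Icc 0 y) (fun r => (y - r) * f r) := by
  have hsub : Icc (0:ℝ) y ⊆ Icc 0 rb := Icc_subset_Icc le_rfl hyb
  have hda : ∀ x ∈ U, DifferentiableAt ℝ f x := fun x hx =>
    ((hf2.differentiableOn (by norm_num)) x hx).differentiableAt (hUo.mem_nhds hx)
  have hd2 : ContDiffOn ℝ 1 (deriv f) U := hf2.deriv_of_isOpen hUo (by norm_num)
  have hda2 : ∀ x ∈ U, DifferentiableAt ℝ (deriv f) x := fun x hx =>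
    ((hd2.differentiableOn (by norm_num)) x hx).differentiableAt (hUo.mem_nhds hx)
  apply concaveOn_of_hasDerivWithinAt2_nonpos (convex_Icc 0 y)
    (f' := fun r => (y - r) * deriv f r - f r)
    (f'' := fun r => (y - r) * deriv (deriv f) r - 2 * deriv f r)
  · exact ((continuous_const.sub continuous_id).continuousOn).mul (hfc.mono hsub)
  · intro x hx
    rw [interior_Icc] at hx
    have hxU : x ∈ U := hU (hsub (Ioo_subset_Icc_self hx))
    have h1 : HasDerivAt (fun r : ℝ => y - r) (-1) x := by
      simpa using (hasDerivAt_id x).const_sub y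
    have h3 := h1.mul (hda x hxU).hasDerivAt
    have heq : (-1) * f x + (y - x) * deriv f x = (y - x) * deriv f x - f x := by ring
    rw [heq] at h3
    exact h3.hasDerivWithinAt
  · intro x hx
    rw [interior_Icc] at hx
    have hxU : x ∈ U := hU (hsub (Ioo_subset_Icc_self hx))
    have h1 : HasDerivAt (fun r : ℝ => y - r) (-1) x := by
      simpa using (hasDerivAt_id x).const_sub y
    have h3 := (h1.mul (hda2 x hxU).hasDerivAt).sub (hda x hxU).hasDerivAt
    have heq : (-1) * deriv f x + (y - x) * deriv (deriv f) x - deriv f x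
        = (y - x) * deriv (deriv f) x - 2 * deriv f x := by ring
    rw [heq] at h3
    exact h3.hasDerivWithinAt
  · intro x hx
    rw [interior_Icc] at hx
    have hxm : x ∈ Icc (0:ℝ) rb := hsub (Ioo_subset_Icc_self hx)
    nlinarith [hf' x hxm, hf'' x hxm, hx.2]

/-- Concavity of `r ↦ (r - x0) * f r` for decreasing strictly concave `f`. -/
lemma concave_mul_right_aux (f : ℝ → ℝ) (U : Set ℝ) (hUo : IsOpen U)
    (rb : ℝ) (hU : Icc (0:ℝ) rb ⊆ U) (hf2 : ContDiffOn ℝ 2 f U)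
    (hfc : ContinuousOn f (Icc 0 rb))
    (hf' : ∀ x ∈ Icc (0:ℝ) rb, deriv f x < 0)
    (hf'' : ∀ x ∈ Icc (0:ℝ) rb, deriv (deriv f) x < 0)
    (x0 : ℝ) (hx0 : 0 ≤ x0) (hx0b : x0 ≤ rb) :
    ConcaveOn ℝ (Icc x0 rb) (fun r => (r - x0) * f r) := by
  have hsub : Icc x0 rb ⊆ Icc 0 rb := Icc_subset_Icc hx0 le_rfl
  have hda : ∀ x ∈ U, DifferentiableAt ℝ f x := fun x hx =>
    ((hf2.differentiableOn (by norm_num)) x hx).differentiableAt (hUo.mem_nhds hx)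
  have hd2 : ContDiffOn ℝ 1 (deriv f) U := hf2.deriv_of_isOpen hUo (by norm_num)
  have hda2 : ∀ x ∈ U, DifferentiableAt ℝ (deriv f) x := fun x hx =>
    ((hd2.differentiableOn (by norm_num)) x hx).differentiableAt (hUo.mem_nhds hx)
  apply concaveOn_of_hasDerivWithinAt2_nonpos (convex_Icc x0 rb)
    (f' := fun r => (r - x0) * deriv f r + f r)
    (f'' := fun r => (r - x0) * deriv (deriv f) r + 2 * deriv f r)
  · exact ((continuous_id.sub continuous_const).continuousOn).mul (hfc.mono hsub)
  · intro x hx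
    rw [interior_Icc] at hx
    have hxU : x ∈ U := hU (hsub (Ioo_subset_Icc_self hx))
    have h1 : HasDerivAt (fun r : ℝ => r - x0) 1 x := by
      simpa using (hasDerivAt_id x).sub_const x0
    have h3 := h1.mul (hda x hxU).hasDerivAt
    have heq : 1 * f x + (x - x0) * deriv f x = (x - x0) * deriv f x + f x := by ring
    rw [heq] at h3
    exact h3.hasDerivWithinAt
  · intro x hx
    rw [interior_Icc] at hx
    have hxU : x ∈ U := hU (hsub (Ioo_subset_Icc_self hx))
    have h1 : HasDerivAt (fun r : ℝ => r - x0) 1 x := by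
      simpa using (hasDerivAt_id x).sub_const x0
    have h3 := (h1.mul (hda2 x hxU).hasDerivAt).add (hda x hxU).hasDerivAt
    have heq : 1 * deriv f x + (x - x0) * deriv (deriv f) x + deriv f x
        = (x - x0) * deriv (deriv f) x + 2 * deriv f x := by ring
    rw [heq] at h3
    exact h3.hasDerivWithinAt
  · intro x hx
    rw [interior_Icc] at hx
    have hxm : x ∈ Icc (0:ℝ) rb := hsub (Ioo_subset_Icc_self hx)
    nlinarith [hf' x hxm, hf'' x hxm, hx.1]

/-- Dominant-response condition for volume targeting: if a type's targeted rate lies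
weakly on the inventory-reducing side of every counterparty peak, the targeted rate is a
best response against every counterparty type. -/
theorem dominant_response_volume_targeting
    (rhat rb Tmax : ℝ) (D S mA sA : ℝ → ℝ)
    (hrhat : 0 < rhat) (hrb : rhat < rb) (hTmax : 0 < Tmax)
    (hDc : ContinuousOn D (Icc 0 rb)) (hDm : StrictMonoOn D (Icc 0 rb))
    (hD0 : D 0 = 0) (hDr : D rhat = Tmax)
    (hSc : ContinuousOn S (Icc 0 rb)) (hSa : StrictAntiOn S (Icc 0 rb))
    (hSb : S rb = 0) (hSr : S rhat = Tmax)
    (U : Set ℝ) (hUo : IsOpen U) (hU : Icc (0:ℝ) rb ⊆ U)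
    (hD2 : ContDiffOn ℝ 2 D U) (hS2 : ContDiffOn ℝ 2 S U)
    (hD' : ∀ x ∈ Icc (0:ℝ) rb, 0 < deriv D x)
    (hD'' : ∀ x ∈ Icc (0:ℝ) rb, deriv (deriv D) x < 0)
    (hS' : ∀ x ∈ Icc (0:ℝ) rb, deriv S x < 0)
    (hS'' : ∀ x ∈ Icc (0:ℝ) rb, deriv (deriv S) x < 0)
    (θl1 θu1 θl2 θu2 : ℝ)
    (hθ1 : 0 < θl1) (hθ1' : θl1 ≤ θu1) (hθ2 : 0 < θl2) (hθ2' : θl2 ≤ θu2)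
    (T : ℝ) (hT0 : 0 < T) (hTle : T ≤ min (θl1 * Tmax) (θl2 * Tmax))
    (σ1 σ2 : ℝ → ℝ)
    (hσ1 : ∀ θ1 ∈ Icc θl1 θu1, σ1 θ1 ∈ Icc (0:ℝ) rhat ∧ θ1 * D (σ1 θ1) = T)
    (hσ2 : ∀ θ2 ∈ Icc θl2 θu2, σ2 θ2 ∈ Icc rhat rb ∧ θ2 * S (σ2 θ2) = T)
    (hmA : ∀ y ∈ Ioc (0:ℝ) rb, mA y ∈ Icc (0:ℝ) y ∧
      (∀ r ∈ Icc (0:ℝ) y, (y - r) * D r ≤ (y - mA y) * D (mA y)) ∧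
      (∀ m ∈ Icc (0:ℝ) y,
        (∀ r ∈ Icc (0:ℝ) y, (y - r) * D r ≤ (y - m) * D m) → m = mA y))
    (hsA : ∀ x ∈ Ico (0:ℝ) rb, sA x ∈ Icc x rb ∧
      (∀ r ∈ Icc x rb, (r - x) * S r ≤ (sA x - x) * S (sA x)) ∧
      (∀ m ∈ Icc x rb,
        (∀ r ∈ Icc x rb, (r - x) * S r ≤ (m - x) * S m) → m = sA x)) :
    (∀ θ1 ∈ Icc θl1 θu1,
      (∀ θ2 ∈ Icc θl2 θu2, σ1 θ1 ≤ mA (σ2 θ2)) →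
      ∀ θ2 ∈ Icc θl2 θu2, ∀ x ∈ Icc (0:ℝ) (σ2 θ2),
        piMMt D S θ1 θ2 x (σ2 θ2) ≤ piMMt D S θ1 θ2 (σ1 θ1) (σ2 θ2)) ∧
    (∀ θ2 ∈ Icc θl2 θu2,
      (∀ θ1 ∈ Icc θl1 θu1, sA (σ1 θ1) ≤ σ2 θ2) →
      ∀ θ1 ∈ Icc θl1 θu1, ∀ y ∈ Icc (σ1 θ1) rb,
        piRMt D S θ1 θ2 (σ1 θ1) y ≤ piRMt D S θ1 θ2 (σ1 θ1) (σ2 θ2)) := by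
  constructor
  · intro θ1 hθ1m hcond θ2 hθ2m x hx
    obtain ⟨hmem1, heq1⟩ := hσ1 θ1 hθ1m
    obtain ⟨hmem2, heq2⟩ := hσ2 θ2 hθ2m
    set x1 := σ1 θ1 with hx1def
    set y := σ2 θ2 with hydef
    have hθ1pos : 0 < θ1 := lt_of_lt_of_le hθ1 hθ1m.1
    have hy0 : 0 < y := lt_of_lt_of_le hrhat hmem2.1
    have hyrb : y ≤ rb := hmem2.2
    have hx1y : x1 ≤ y := le_trans hmem1.2 hmem2.1
    have hx1rb : x1 ∈ Icc (0:ℝ) rb := ⟨hmem1.1, le_trans hmem1.2 hrb.le⟩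
    have hxrb : x ∈ Icc (0:ℝ) rb := ⟨hx.1, le_trans hx.2 hyrb⟩
    have hRHS : piMMt D S θ1 θ2 x1 y = (1/2) * (y - x1) * T := by
      unfold piMMt interQt
      rw [heq1, heq2, min_self, sub_self, max_eq_left (sub_nonneg.2 hx1y)]
      simp
    rw [hRHS]
    rcases le_or_gt x x1 with hle | hgt
    · have hDx : θ1 * D x ≤ T := by
        rw [← heq1]
        exact mul_le_mul_of_nonneg_left (hDm.monotoneOn hxrb hx1rb hle) hθ1pos.le
      have hval : piMMt D S θ1 θ2 x y = (1/2) * (y - x) * (θ1 * D x) := by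
        unfold piMMt interQt
        rw [heq2, min_eq_left hDx, sub_self, max_eq_left (sub_nonneg.2 hx.2)]
        simp
      rw [hval]
      have hconc := concave_mul_left_aux D U hUo rb hU hD2 hDc hD' hD'' y hy0 hyrb
      obtain ⟨hmAmem, hmAmax, -⟩ := hmA y ⟨hy0, hyrb⟩
      have hxm : x1 ≤ mA y := hcond θ2 hθ2m
      have hseg : x1 ∈ segment ℝ x (mA y) := by
        rw [segment_eq_Icc (le_trans hle hxm)]; exact ⟨hle, hxm⟩
      have hmin := hconc.ge_on_segment hx hmAmem hseg
      rw [min_eq_left (hmAmax x hx)] at hmin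
      have hgle : (y - x) * D x ≤ (y - x1) * D x1 := hmin
      rw [← heq1]
      nlinarith [mul_le_mul_of_nonneg_left hgle hθ1pos.le]
    · have hDx : T ≤ θ1 * D x := by
        rw [← heq1]
        exact mul_le_mul_of_nonneg_left (hDm.monotoneOn hx1rb hxrb hgt.le) hθ1pos.le
      have hval : piMMt D S θ1 θ2 x y
          = (1/2) * (y - x) * T - (θ1 * D x - T) * x := by
        unfold piMMt interQt
        rw [heq2, min_eq_right hDx, max_eq_left (sub_nonneg.2 hx.2),
          max_eq_left (sub_nonneg.2 hDx)]
      rw [hval]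
      nlinarith [mul_nonneg (sub_nonneg.2 hDx) hx.1, hT0, hgt]
  · intro θ2 hθ2m hcond θ1 hθ1m y hy
    obtain ⟨hmem1, heq1⟩ := hσ1 θ1 hθ1m
    obtain ⟨hmem2, heq2⟩ := hσ2 θ2 hθ2m
    set x1 := σ1 θ1 with hx1def
    set y1 := σ2 θ2 with hy1def
    have hθ2pos : 0 < θ2 := lt_of_lt_of_le hθ2 hθ2m.1
    have hx10 : 0 ≤ x1 := hmem1.1
    have hx1rb : x1 ≤ rb := le_trans hmem1.2 hrb.le
    have hx1y1 : x1 ≤ y1 := le_trans hmem1.2 hmem2.1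
    have hy1rb : y1 ∈ Icc (0:ℝ) rb := ⟨le_trans hx10 hx1y1, hmem2.2⟩
    have hyrb : y ∈ Icc (0:ℝ) rb := ⟨le_trans hx10 hy.1, hy.2⟩
    have hRHS : piRMt D S θ1 θ2 x1 y1 = (1/2) * (y1 - x1) * T := by
      unfold piRMt interQt
      rw [heq1, heq2, min_self, sub_self, max_eq_left (sub_nonneg.2 hx1y1)]
      simp
    rw [hRHS]
    rcases le_or_gt y1 y with hle | hgt
    · have hSy : θ2 * S y ≤ T := by
        rw [← heq2]
        exact mul_le_mul_of_nonneg_left (hSa.antitoneOn hy1rb hyrb hle) hθ2pos.le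
      have hval : piRMt D S θ1 θ2 x1 y = (1/2) * (y - x1) * (θ2 * S y) := by
        unfold piRMt interQt
        rw [heq1, min_eq_right hSy, sub_self, max_eq_left (sub_nonneg.2 hy.1)]
        simp
      rw [hval]
      have hconc := concave_mul_right_aux S U hUo rb hU hS2 hSc hS' hS'' x1 hx10 hx1rb
      obtain ⟨hsAmem, hsAmax, -⟩ := hsA x1 ⟨hx10, lt_of_le_of_lt hmem1.2 hrb⟩
      have hym : sA x1 ≤ y1 := hcond θ1 hθ1m
      have hseg : y1 ∈ segment ℝ (sA x1) y := by
        rw [segment_eq_Icc (le_trans hym hle)]; exact ⟨hym, hle⟩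
      have hmin := hconc.ge_on_segment hsAmem hy hseg
      rw [min_eq_right (hsAmax y hy)] at hmin
      have hgle : (y - x1) * S y ≤ (y1 - x1) * S y1 := hmin
      rw [← heq2]
      nlinarith [mul_le_mul_of_nonneg_left hgle hθ2pos.le]
    · have hSy : T ≤ θ2 * S y := by
        rw [← heq2]
        exact mul_le_mul_of_nonneg_left (hSa.antitoneOn hyrb hy1rb hgt.le) hθ2pos.le
      have hval : piRMt D S θ1 θ2 x1 y
          = (1/2) * (y - x1) * T - (θ2 * S y - T) * y := by
        unfold piRMt interQt
        rw [heq1, min_eq_left hSy, max_eq_left (sub_nonneg.2 hy.1),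
          max_eq_left (sub_nonneg.2 hSy)]
      rw [hval]
      nlinarith [mul_nonneg (sub_nonneg.2 hSy) hyrb.1, hT0, hgt]
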